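/- Every monochromatic connected graph G with independence number at most 2 can be made properly connected by recoloring at most 2 edges (with new colors), i.e., pc_opt'(G) ≤ 2. -/

import Mathlib

open SimpleGraph

/-- A walk is properly colored: no two consecutive edges share a color. -/
def ProperWalk {V : Type*} {G : SimpleGraph V} (c : Sym2 V → ℕ) {u v : V} (p : G.Walk u v) : Prop :=
  (p.edges.map c).Chain' (· ≠ ·)

/-- An edge-colored graph is properly connected. -/
def ProperlyConnected {V : Type*} (G : SimpleGraph V) (c : Sym2 V → ℕ) : Prop :=
  ∀ u v : V, u ≠ v → ∃ p : G.Walk u v, p.IsPath ∧ ProperWalk c p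

/-- Number of edges recolored away from the base color 0. -/
noncomputable def numRecolored {V : Type*} (G : SimpleGraph V) (c : Sym2 V → ℕ) : ℕ :=
  {e | e ∈ G.edgeSet ∧ c e ≠ 0}.ncard

/-- Number of new colors used. -/
noncomputable def numNewColors {V : Type*} (G : SimpleGraph V) (c : Sym2 V → ℕ) : ℕ :=
  (c '' {e | e ∈ G.edgeSet ∧ c e ≠ 0}).ncard

/-- Optimal proper connection number: minimum of p + q. -/
noncomputable def pcOpt {V : Type*} (G : SimpleGraph V) : ℕ :=
  sInf { n | ∃ c : Sym2 V → ℕ, ProperlyConnected G c ∧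
    n = numRecolored G c + numNewColors G c }

/-- Variant counting only the number of recolored edges. -/
noncomputable def pcOpt' {V : Type*} (G : SimpleGraph V) : ℕ :=
  sInf { p | ∃ c : Sym2 V → ℕ, ProperlyConnected G c ∧ p = numRecolored G c }

namespace Stmt19Aux

variable {V : Type*}

/-- Coloring for the "common neighbor" case. -/
def colA (a c0 b : V) [DecidableEq V] : Sym2 V → ℕ :=
  fun e => if e = s(a, c0) then 1 else if e = s(c0, b) then 2 else 0

/-- Coloring for the "two cliques" case. -/
def colB (x0 y0 : V) [DecidableEq V] : Sym2 V → ℕ :=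
  fun e => if e = s(x0, y0) then 1 else 0

lemma properWalk_reverse {G : SimpleGraph V} (c : Sym2 V → ℕ) {u v : V} (p : G.Walk u v)
    (h : ProperWalk c p) : ProperWalk c p.reverse := by
  unfold ProperWalk at *
  rw [Walk.edges_reverse, List.map_reverse, List.Chain', List.isChain_reverse]
  exact h.imp fun a b hab => hab.symm

lemma single_edge {G : SimpleGraph V} (c : Sym2 V → ℕ) {u v : V} (h : G.Adj u v) :
    ∃ p : G.Walk u v, p.IsPath ∧ ProperWalk c p := by
  refine ⟨Walk.cons h Walk.nil, ?_, ?_⟩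
  · simp [Walk.isPath_def, h.ne]
  · simp [ProperWalk, List.Chain']

lemma cross {G : SimpleGraph V} (P Q : V → Prop) (hPQ : ∀ w, P w ∨ Q w)
    (hnot : ∀ w, ¬ (P w ∧ Q w)) {s t : V} (p : G.Walk s t) :
    P s → Q t → ∃ x y, G.Adj x y ∧ P x ∧ Q y := by
  induction p with
  | nil => intro hs ht; exact absurd ⟨hs, ht⟩ (hnot _)
  | cons h q ih =>
    intro hs ht
    rcases hPQ _ with hm | hm
    · exact ih hm ht
    · exact ⟨_, _, h, hs, hm⟩

/-- If `a,b` are nonadjacent and `u = a`, then any vertex nonadjacent to `u` is on the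
`b`-side. -/
lemma side {G : SimpleGraph V} {a b u v : V}
    (halpha : ∀ x y z : V, x ≠ y → x ≠ z → y ≠ z → G.Adj x y ∨ G.Adj x z ∨ G.Adj y z)
    (hab : a ≠ b) (hnab : ¬ G.Adj a b) (huv : u ≠ v) (hadj : ¬ G.Adj u v) (hua : u = a) :
    v = b ∨ G.Adj v b := by
  subst hua
  rcases eq_or_ne v b with h | hvb
  · exact Or.inl h
  · rcases halpha u b v hab huv (Ne.symm hvb) with h | h | h
    · exact absurd h hnab
    · exact absurd h hadj
    · exact Or.inr h.symm

lemma core1 [DecidableEq V] {G : SimpleGraph V} {a b c0 u v : V} (hab : a ≠ b)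
    (hnab : ¬ G.Adj a b) (h1 : G.Adj a c0) (h2 : G.Adj c0 b)
    (hu : u = a ∨ G.Adj u a) (hv : v = b ∨ G.Adj v b) (huv : u ≠ v) (hnadj : ¬ G.Adj u v) :
    ∃ p : G.Walk u v, p.IsPath ∧ ProperWalk (colA a c0 b) p := by
  have hac0 : a ≠ c0 := h1.ne
  have hc0b : c0 ≠ b := h2.ne
  rcases hu with rfl | hu <;> rcases hv with rfl | hv
  · -- u = a, v = b
    refine ⟨Walk.cons h1 (Walk.cons h2 Walk.nil), ?_, ?_⟩
    · simp [Walk.isPath_def, hac0, huv, hc0b]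
    · simp [ProperWalk, List.Chain', colA, Sym2.eq_iff, hac0, huv, hc0b, hac0.symm, huv.symm, hc0b.symm]
  · -- u = a, v adj b
    have hvc0 : v ≠ c0 := by rintro rfl; exact hnadj h1
    have hvb : v ≠ b := hv.ne
    refine ⟨Walk.cons h1 (Walk.cons h2 (Walk.cons hv.symm Walk.nil)), ?_, ?_⟩
    · simp [Walk.isPath_def, hac0, hab, huv, hc0b, hvc0.symm, hvb.symm]
    · simp [ProperWalk, List.Chain', colA, Sym2.eq_iff, hac0, hab, hc0b, huv, hvc0, hvb,
        hac0.symm, hab.symm, hc0b.symm, huv.symm, hvc0.symm, hvb.symm]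
  · -- u adj a, v = b
    have hua : u ≠ a := hu.ne
    have huc0 : u ≠ c0 := by rintro rfl; exact hnadj h2
    refine ⟨Walk.cons hu (Walk.cons h1 (Walk.cons h2 Walk.nil)), ?_, ?_⟩
    · simp [Walk.isPath_def, hua, huc0, huv, hac0, hab, hc0b]
    · simp [ProperWalk, List.Chain', colA, Sym2.eq_iff, hac0, hab, hc0b, hua, huc0, huv,
        hac0.symm, hab.symm, hc0b.symm, hua.symm, huc0.symm, huv.symm]
  · -- u adj a, v adj b
    have hua : u ≠ a := hu.ne
    have hvb : v ≠ b := hv.ne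
    have hub : u ≠ b := by rintro rfl; exact hnab hu.symm
    have hva : v ≠ a := by rintro rfl; exact hnab hv
    rcases eq_or_ne u c0 with rfl | huc0
    · refine ⟨Walk.cons h2 (Walk.cons hv.symm Walk.nil), ?_, ?_⟩
      · simp [Walk.isPath_def, hub, huv, hvb.symm]
      · simp [ProperWalk, List.Chain', colA, Sym2.eq_iff, hac0, hab, hc0b, hua, hub, huv, hva, hvb,
          hac0.symm, hab.symm, hc0b.symm, hua.symm, hub.symm, huv.symm, hva.symm, hvb.symm]
    · rcases eq_or_ne v c0 with rfl | hvc0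
      · refine ⟨Walk.cons hu (Walk.cons h1 Walk.nil), ?_, ?_⟩
        · simp [Walk.isPath_def, hua, huv, hac0]
        · simp [ProperWalk, List.Chain', colA, Sym2.eq_iff, hac0, hab, hc0b, hua, hub, huv, hva, hvb,
            hac0.symm, hab.symm, hc0b.symm, hua.symm, hub.symm, huv.symm, hva.symm, hvb.symm]
      · refine ⟨Walk.cons hu (Walk.cons h1 (Walk.cons h2 (Walk.cons hv.symm Walk.nil))), ?_, ?_⟩
        · simp [Walk.isPath_def, hua, hub, huc0, huv, hac0, hab, hva.symm, hc0b, hvc0.symm,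
            hvb.symm]
        · simp [ProperWalk, List.Chain', colA, Sym2.eq_iff, hac0, hab, hc0b, hua, hub, huv, hva, hvb,
            huc0, hvc0, hac0.symm, hab.symm, hc0b.symm, hua.symm, hub.symm, huv.symm,
            hva.symm, hvb.symm, huc0.symm, hvc0.symm]

lemma core2 [DecidableEq V] {G : SimpleGraph V} {x0 y0 u v : V} (hxy : G.Adj x0 y0)
    (hux0 : u = x0 ∨ G.Adj u x0) (hvy0 : v = y0 ∨ G.Adj v y0)
    (huy : u ≠ y0) (hvx : v ≠ x0) (huv : u ≠ v) :
    ∃ p : G.Walk u v, p.IsPath ∧ ProperWalk (colB x0 y0) p := by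
  have hxy' : x0 ≠ y0 := hxy.ne
  rcases hux0 with rfl | hu <;> rcases hvy0 with rfl | hv
  · exact single_edge _ hxy
  · have hvy : v ≠ y0 := hv.ne
    refine ⟨Walk.cons hxy (Walk.cons hv.symm Walk.nil), ?_, ?_⟩
    · simp [Walk.isPath_def, hxy', hvx.symm, hvy.symm]
    · simp [ProperWalk, List.Chain', colB, Sym2.eq_iff, hxy', hxy'.symm, hvx, hvy, hvx.symm, hvy.symm]
  · have hux : u ≠ x0 := hu.ne
    refine ⟨Walk.cons hu (Walk.cons hxy Walk.nil), ?_, ?_⟩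
    · simp [Walk.isPath_def, hux, huy, hxy']
    · simp [ProperWalk, List.Chain', colB, Sym2.eq_iff, hxy', hxy'.symm, hux, huy, hux.symm, huy.symm]
  · have hux : u ≠ x0 := hu.ne
    have hvy : v ≠ y0 := hv.ne
    refine ⟨Walk.cons hu (Walk.cons hxy (Walk.cons hv.symm Walk.nil)), ?_, ?_⟩
    · simp [Walk.isPath_def, hux, huy, huv, hxy', hvx.symm, hvy.symm]
    · simp [ProperWalk, List.Chain', colB, Sym2.eq_iff, hxy', hxy'.symm, hux, huy, hux.symm, huy.symm,
        hvx, hvy, hvx.symm, hvy.symm]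

lemma ncard_le_two {G : SimpleGraph V} (c : Sym2 V → ℕ) (e1 e2 : Sym2 V)
    (h : {e | e ∈ G.edgeSet ∧ c e ≠ 0} ⊆ {e1, e2}) : numRecolored G c ≤ 2 := by
  unfold numRecolored
  calc {e | e ∈ G.edgeSet ∧ c e ≠ 0}.ncard ≤ ({e1, e2} : Set (Sym2 V)).ncard :=
        Set.ncard_le_ncard h (Set.toFinite _)
    _ ≤ ({e2} : Set (Sym2 V)).ncard + 1 := Set.ncard_insert_le _ _
    _ ≤ 2 := by rw [Set.ncard_singleton]

end Stmt19Aux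

open Stmt19Aux

theorem stmt19 {V : Type*} [Fintype V] (G : SimpleGraph V) (hconn : G.Connected)
    (halpha : ∀ a b c : V, a ≠ b → a ≠ c → b ≠ c →
      G.Adj a b ∨ G.Adj a c ∨ G.Adj b c) :
    pcOpt' G ≤ 2 := by
  classical
  by_cases hcomp : ∀ u v : V, u ≠ v → G.Adj u v
  · -- complete graph: the constant coloring works
    have hpc : ProperlyConnected G (fun _ => 0) := fun u v huv =>
      single_edge _ (hcomp u v huv)
    have hzero : numRecolored G (fun _ => (0 : ℕ)) = 0 := by
      have h : {e | e ∈ G.edgeSet ∧ (fun _ => (0:ℕ)) e ≠ 0} = ∅ := by simp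
      rw [numRecolored, h, Set.ncard_empty]
    calc pcOpt' G ≤ numRecolored G (fun _ => 0) := Nat.sInf_le ⟨_, hpc, rfl⟩
      _ ≤ 2 := by rw [hzero]; norm_num
  · push_neg at hcomp
    obtain ⟨a, b, hab, hnab⟩ := hcomp
    by_cases hC : ∃ c0, G.Adj a c0 ∧ G.Adj c0 b
    · obtain ⟨c0, h1, h2⟩ := hC
      have hpc : ProperlyConnected G (colA a c0 b) := by
        intro u v huv
        by_cases hadj : G.Adj u v
        · exact single_edge _ hadj
        · have hadj' : ¬ G.Adj v u := fun h => hadj h.symm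
          have hside : ((u = a ∨ G.Adj u a) ∧ (v = b ∨ G.Adj v b)) ∨
              ((v = a ∨ G.Adj v a) ∧ (u = b ∨ G.Adj u b)) := by
            rcases eq_or_ne u a with hua | hua
            · exact Or.inl ⟨Or.inl hua, side halpha hab hnab huv hadj hua⟩
            · rcases eq_or_ne v a with hva | hva
              · exact Or.inr ⟨Or.inl hva, side halpha hab hnab huv.symm hadj' hva⟩
              · rcases eq_or_ne u b with hub | hub
                · exact Or.inr
                    ⟨side halpha hab.symm (fun h => hnab h.symm) huv hadj hub, Or.inl hub⟩
                · rcases eq_or_ne v b with hvb | hvb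
                  · exact Or.inl
                      ⟨side halpha hab.symm (fun h => hnab h.symm) huv.symm hadj' hvb,
                        Or.inl hvb⟩
                  · have hu' : G.Adj u a ∨ G.Adj u b := by
                      rcases halpha a b u hab (Ne.symm hua) (Ne.symm hub) with h | h | h
                      · exact absurd h hnab
                      · exact Or.inl h.symm
                      · exact Or.inr h.symm
                    have hv' : G.Adj v a ∨ G.Adj v b := by
                      rcases halpha a b v hab (Ne.symm hva) (Ne.symm hvb) with h | h | h
                      · exact absurd h hnab
                      · exact Or.inl h.symm
                      · exact Or.inr h.symm
                    rcases hu' with hu' | hu' <;> rcases hv' with hv' | hv'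
                    · rcases halpha u v b huv hub hvb with h | h | h
                      · exact absurd h hadj
                      · exact Or.inr ⟨Or.inr hv', Or.inr h⟩
                      · exact Or.inl ⟨Or.inr hu', Or.inr h⟩
                    · exact Or.inl ⟨Or.inr hu', Or.inr hv'⟩
                    · exact Or.inr ⟨Or.inr hv', Or.inr hu'⟩
                    · rcases halpha u v a huv hua hva with h | h | h
                      · exact absurd h hadj
                      · exact Or.inl ⟨Or.inr h, Or.inr hv'⟩
                      · exact Or.inr ⟨Or.inr h, Or.inr hu'⟩
          rcases hside with ⟨hu, hv⟩ | ⟨hv, hu⟩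
          · exact core1 hab hnab h1 h2 hu hv huv hadj
          · obtain ⟨p, hp, hpw⟩ := core1 hab hnab h1 h2 hv hu huv.symm hadj'
            exact ⟨p.reverse, hp.reverse, properWalk_reverse _ _ hpw⟩
      have hb : numRecolored G (colA a c0 b) ≤ 2 := by
        refine ncard_le_two _ s(a, c0) s(c0, b) ?_
        rintro e ⟨-, hne⟩
        unfold colA at hne
        split_ifs at hne with hh1 hh2
        · exact Or.inl hh1
        · exact Or.inr hh2
        · exact absurd rfl hne
      exact le_trans (Nat.sInf_le ⟨_, hpc, rfl⟩) hb
    · -- two-cliques case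
      set P : V → Prop := fun w => w = a ∨ G.Adj w a with hP
      set Q : V → Prop := fun w => w = b ∨ G.Adj w b with hQ
      have hPQ : ∀ w, P w ∨ Q w := by
        intro w
        rcases eq_or_ne w a with hwa | hwa
        · exact Or.inl (Or.inl hwa)
        · rcases eq_or_ne w b with hwb | hwb
          · exact Or.inr (Or.inl hwb)
          · rcases halpha a b w hab (Ne.symm hwa) (Ne.symm hwb) with h | h | h
            · exact absurd h hnab
            · exact Or.inl (Or.inr h.symm)
            · exact Or.inr (Or.inr h.symm)
      have hnot : ∀ w, ¬ (P w ∧ Q w) := by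
        rintro w ⟨hw1, hw2⟩
        rcases hw1 with hw1 | hw1 <;> rcases hw2 with hw2 | hw2
        · exact hab (hw1.symm.trans hw2)
        · exact hnab (hw1 ▸ hw2)
        · exact hnab (hw2 ▸ hw1).symm
        · exact hC ⟨w, hw1.symm, hw2⟩
      have hPne : ∀ w, P w → w ≠ b := fun w hw hwb => hnot w ⟨hw, Or.inl hwb⟩
      have hQne : ∀ w, Q w → w ≠ a := fun w hw hwa => hnot w ⟨Or.inl hwa, hw⟩
      have hPclique : ∀ x y, P x → P y → x ≠ y → G.Adj x y := by
        intro x y hx hy hne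
        rcases hx with hx | hx
        · rcases hy with hy | hy
          · exact absurd (hx.trans hy.symm) hne
          · exact hx ▸ hy.symm
        · rcases hy with hy | hy
          · exact hy ▸ hx
          · rcases halpha x y b hne (hPne x (Or.inr hx)) (hPne y (Or.inr hy)) with h | h | h
            · exact h
            · exact absurd ⟨Or.inr hx, Or.inr h⟩ (hnot x)
            · exact absurd ⟨Or.inr hy, Or.inr h⟩ (hnot y)
      have hQclique : ∀ x y, Q x → Q y → x ≠ y → G.Adj x y := by
        intro x y hx hy hne
        rcases hx with hx | hx
        · rcases hy with hy | hy
          · exact absurd (hx.trans hy.symm) hne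
          · exact hx ▸ hy.symm
        · rcases hy with hy | hy
          · exact hy ▸ hx
          · rcases halpha x y a hne (hQne x (Or.inr hx)) (hQne y (Or.inr hy)) with h | h | h
            · exact h
            · exact absurd ⟨Or.inr h, Or.inr hx⟩ (hnot x)
            · exact absurd ⟨Or.inr h, Or.inr hy⟩ (hnot y)
      obtain ⟨p⟩ := hconn.preconnected a b
      obtain ⟨x0, y0, hxy, hPx, hQy⟩ := cross P Q hPQ hnot p (Or.inl rfl) (Or.inl rfl)
      have hpc : ProperlyConnected G (colB x0 y0) := by
        intro u v huv
        by_cases hadj : G.Adj u v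
        · exact single_edge _ hadj
        · have key : ∀ u v : V, u ≠ v → ¬ G.Adj u v → P u → Q v →
              ∃ p : G.Walk u v, p.IsPath ∧ ProperWalk (colB x0 y0) p := by
            intro u v huv hadj hu hv
            have huy : u ≠ y0 := fun h => hnot u ⟨hu, h ▸ hQy⟩
            have hvx : v ≠ x0 := fun h => hnot v ⟨h ▸ hPx, hv⟩
            have hux0 : u = x0 ∨ G.Adj u x0 := by
              rcases eq_or_ne u x0 with h | h
              · exact Or.inl h
              · exact Or.inr (hPclique u x0 hu hPx h)
            have hvy0 : v = y0 ∨ G.Adj v y0 := by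
              rcases eq_or_ne v y0 with h | h
              · exact Or.inl h
              · exact Or.inr (hQclique v y0 hv hQy h)
            exact core2 hxy hux0 hvy0 huy hvx huv
          rcases hPQ u with hu | hu <;> rcases hPQ v with hv | hv
          · exact absurd (hPclique u v hu hv huv) hadj
          · exact key u v huv hadj hu hv
          · obtain ⟨p, hp, hpw⟩ := key v u huv.symm (fun h => hadj h.symm) hv hu
            exact ⟨p.reverse, hp.reverse, properWalk_reverse _ _ hpw⟩
          · exact absurd (hQclique u v hu hv huv) hadj
      have hb : numRecolored G (colB x0 y0) ≤ 2 := by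
        refine ncard_le_two _ s(x0, y0) s(x0, y0) ?_
        rintro e ⟨-, hne⟩
        unfold colB at hne
        split_ifs at hne with hh1
        · exact Or.inl hh1
        · exact absurd rfl hne
      exact le_trans (Nat.sInf_le ⟨_, hpc, rfl⟩) hb
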